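/- (Hadamard's inequality for function field lattices) Let B be a basis of a normed space E over K = k(t). Then |d(B)| ≤ vol(B) - vol(E), where vol(B) = Σ_{b∈B} ‖b‖, vol(E) is the volume of any orthonormal basis of E, and |d(B)| is the degree of the determinant of the transition matrix from B to an orthonormal basis of E. -/

import Mathlib

open scoped Classical in
/-- The degree function `|·| = -v_∞` on `K = k(t)`, with `|0| = -∞`. -/
noncomputable def degK {k : Type*} [Field k] (a : RatFunc k) : WithBot ℝ :=
  if a = 0 then ⊥ else ((a.intDegree : ℝ) : WithBot ℝ)

section aux

variable {k : Type*} [Field k]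

theorem degK_zero : degK (0 : RatFunc k) = ⊥ := by simp [degK]

theorem degK_one : degK (1 : RatFunc k) = 0 := by simp [degK]

theorem degK_neg (a : RatFunc k) : degK (-a) = degK a := by
  by_cases h : a = 0 <;> simp [degK, h]

theorem degK_mul (a b : RatFunc k) : degK (a * b) = degK a + degK b := by
  by_cases ha : a = 0
  · simp [ha, degK_zero]
  by_cases hb : b = 0
  · simp [hb, degK_zero]
  simp only [degK, if_neg ha, if_neg hb, if_neg (mul_ne_zero ha hb),
    RatFunc.intDegree_mul ha hb]
  rw [Int.cast_add, ← WithBot.coe_add]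

theorem degK_prod {ι : Type*} (s : Finset ι) (f : ι → RatFunc k) :
    degK (∏ i ∈ s, f i) = ∑ i ∈ s, degK (f i) := by
  classical
  induction s using Finset.induction with
  | empty => simp [degK_one]
  | insert a s h ih => simp [Finset.prod_insert h, Finset.sum_insert h, degK_mul, ih]

theorem degK_add (a b : RatFunc k) : degK (a + b) ≤ max (degK a) (degK b) := by
  by_cases hab : a + b = 0
  · simp [hab, degK_zero]
  by_cases hb : b = 0
  · simp [hb]
  have h := RatFunc.intDegree_add_le hb hab
  by_cases ha : a = 0
  · simp only [ha, zero_add] at hab ⊢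
    exact le_max_right _ _
  simp only [degK, if_neg ha, if_neg hb, if_neg hab]
  rw [le_max_iff] at h ⊢
  rcases h with h | h
  · exact Or.inl (by exact_mod_cast h)
  · exact Or.inr (by exact_mod_cast h)

theorem degK_sum_le {ι : Type*} (s : Finset ι) (f : ι → RatFunc k) :
    degK (∑ i ∈ s, f i) ≤ s.sup fun i => degK (f i) := by
  classical
  induction s using Finset.induction with
  | empty => simp [degK_zero]
  | insert a s h ih =>
    rw [Finset.sum_insert h, Finset.sup_insert]
    exact (degK_add _ _).trans (max_le_max le_rfl ih)

theorem withBot_coe_sum {ι : Type*} (s : Finset ι) (g : ι → ℝ) :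
    ∑ i ∈ s, ((g i : ℝ) : WithBot ℝ) = ((∑ i ∈ s, g i : ℝ) : WithBot ℝ) := by
  classical
  induction s using Finset.induction with
  | empty => simp
  | insert a s h ih =>
    rw [Finset.sum_insert h, Finset.sum_insert h, ih, ← WithBot.coe_add]

end aux

/-- (Hadamard's inequality.) For a basis `B = (b₁,…,b_n)` of a normed
space `E` over `K = k(t)` with transition matrix `T` to an orthonormal basis
`B' = (b'₁,…,b'_n)`, one has `|d(B)| = deg (det T) ≤ vol(B) - vol(E)`. -/
theorem stmt15 {k : Type*} [Field k] {E : Type*} [AddCommGroup E]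
    [Module (RatFunc k) E] [Module (Polynomial k) E] [Module k E]
    [IsScalarTower (Polynomial k) (RatFunc k) E] [IsScalarTower k (RatFunc k) E]
    (N : E → WithBot ℝ)
    (hadd : ∀ x y : E, N (x + y) ≤ max (N x) (N y))
    (hsmul : ∀ (a : RatFunc k) (x : E), N (a • x) = degK a + N x)
    (hzero : ∀ x : E, N x = ⊥ ↔ x = 0)
    (hlat : ∃ s : Finset E, Submodule.span (RatFunc k) (s : Set E) = ⊤ ∧
      ∀ r : ℝ, ∃ S : Finset E,
        {x : E | x ∈ Submodule.span (Polynomial k) (s : Set E) ∧ N x ≤ (r : ℝ)} ⊆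
          (Submodule.span k (S : Set E) : Set E))
    (n : ℕ) (b b' : Fin n → E)
    (hbasis : LinearIndependent (RatFunc k) b ∧
      Submodule.span (RatFunc k) (Set.range b) = ⊤)
    (hred' : ∀ a : Fin n → RatFunc k,
      N (∑ i, a i • b' i) = Finset.univ.sup (fun i => degK (a i) + N (b' i)))
    (r r' : Fin n → ℝ)
    (hr : ∀ i, N (b i) = ((r i : ℝ) : WithBot ℝ))
    (hr' : ∀ i, N (b' i) = ((r' i : ℝ) : WithBot ℝ))
    (horth : ∀ i, -1 < r' i ∧ r' i ≤ 0)
    (T : Matrix (Fin n) (Fin n) (RatFunc k))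
    (hT : ∀ i, b i = ∑ j, T i j • b' j) :
    degK T.det ≤ (((∑ i, r i) - (∑ i, r' i) : ℝ) : WithBot ℝ) := by
  classical
  -- key pointwise bound
  have key : ∀ i j, degK (T i j) + ((r' j : ℝ) : WithBot ℝ) ≤ ((r i : ℝ) : WithBot ℝ) := by
    intro i j
    have h1 : ((r i : ℝ) : WithBot ℝ) =
        Finset.univ.sup (fun j => degK (T i j) + N (b' j)) := by
      rw [← hr i, hT i, hred' (T i)]
    rw [h1]
    have := Finset.le_sup (f := fun j => degK (T i j) + N (b' j)) (Finset.mem_univ j)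
    simpa only [hr'] using this
  have key2 : ∀ i j, degK (T i j) ≤ ((r i - r' j : ℝ) : WithBot ℝ) := by
    intro i j
    have h := key i j
    cases hd : degK (T i j) with
    | bot => exact bot_le
    | coe x =>
      rw [hd] at h
      have h' : x + r' j ≤ r i := by exact_mod_cast h
      exact_mod_cast WithBot.coe_le_coe.mpr (by linarith : x ≤ r i - r' j)
  rw [Matrix.det_apply']
  refine (degK_sum_le _ _).trans (Finset.sup_le ?_)
  intro σ _
  have hε : degK ((Equiv.Perm.sign σ : ℤ) : RatFunc k) = 0 := by
    rcases Int.units_eq_one_or (Equiv.Perm.sign σ) with h | h <;> rw [h]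
    · simpa using degK_one
    · push_cast
      rw [degK_neg]
      exact degK_one
  rw [degK_mul, hε, zero_add, degK_prod]
  calc ∑ i, degK (T (σ i) i) ≤ ∑ i, ((r (σ i) - r' i : ℝ) : WithBot ℝ) :=
        Finset.sum_le_sum fun i _ => key2 (σ i) i
    _ = ((∑ i, (r (σ i) - r' i) : ℝ) : WithBot ℝ) := withBot_coe_sum _ _
    _ = (((∑ i, r i) - (∑ i, r' i) : ℝ) : WithBot ℝ) := by
        rw [Finset.sum_sub_distrib, Equiv.sum_comp σ r]
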